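/- For fixed m and fixed q ∈ (0, 1/2], the ncDNA capacity as a function of γ ∈ [0,1] satisfies C_nc(γ=1) ≤ C_nc(γ) ≤ C_nc(γ=0). -/

import Mathlib

open Real

/-- ncDNA capacity after `m` mutation stages, as a function of the Kimura
parameters `q` and `γ`. -/
noncomputable def Cnc (q : ℝ) (m : ℕ) (γ : ℝ) : ℝ :=
  2 + (1 + 2 * (1 - 2 * (1 - γ / 3) * q) ^ m + (1 - 4 * γ / 3 * q) ^ m) / 4
        * logb 2 ((1 + 2 * (1 - 2 * (1 - γ / 3) * q) ^ m + (1 - 4 * γ / 3 * q) ^ m) / 4)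
    + (1 - 2 * (1 - 2 * (1 - γ / 3) * q) ^ m + (1 - 4 * γ / 3 * q) ^ m) / 4
        * logb 2 ((1 - 2 * (1 - 2 * (1 - γ / 3) * q) ^ m + (1 - 4 * γ / 3 * q) ^ m) / 4)
    + (1 - (1 - 4 * γ / 3 * q) ^ m) / 2 * logb 2 ((1 - (1 - 4 * γ / 3 * q) ^ m) / 4)


set_option maxHeartbeats 1000000 in
lemma Cnc_hasDerivAt (q : ℝ) (m : ℕ) (γ : ℝ)
    (hp1 : (1 + 2 * (1 - 2 * (1 - γ / 3) * q) ^ m + (1 - 4 * γ / 3 * q) ^ m) / 4 ≠ 0)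
    (hp2 : (1 - 2 * (1 - 2 * (1 - γ / 3) * q) ^ m + (1 - 4 * γ / 3 * q) ^ m) / 4 ≠ 0)
    (hc : (1 - (1 - 4 * γ / 3 * q) ^ m) / 4 ≠ 0) :
    HasDerivAt (Cnc q m)
      ((↑m * q / 3) *
        ((1 - 2 * (1 - γ / 3) * q) ^ (m - 1) *
            (log ((1 + 2 * (1 - 2 * (1 - γ / 3) * q) ^ m + (1 - 4 * γ / 3 * q) ^ m) / 4)
              - log ((1 - 2 * (1 - 2 * (1 - γ / 3) * q) ^ m + (1 - 4 * γ / 3 * q) ^ m) / 4))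
          - (1 - 4 * γ / 3 * q) ^ (m - 1) *
            (log ((1 + 2 * (1 - 2 * (1 - γ / 3) * q) ^ m + (1 - 4 * γ / 3 * q) ^ m) / 4)
              + log ((1 - 2 * (1 - 2 * (1 - γ / 3) * q) ^ m + (1 - 4 * γ / 3 * q) ^ m) / 4)
              - 2 * log ((1 - (1 - 4 * γ / 3 * q) ^ m) / 4))) / log 2) γ := by
  have hM : HasDerivAt (fun t : ℝ => 1 - 2 * (1 - t / 3) * q) (-(2 * -(1/3) * q)) γ :=
    ((((hasDerivAt_id γ).div_const 3).const_sub 1).const_mul 2 |>.mul_const q).const_sub 1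
  have hL : HasDerivAt (fun t : ℝ => 1 - 4 * t / 3 * q) (-(4 * 1 / 3 * q)) γ :=
    ((((hasDerivAt_id γ).const_mul 4).div_const 3).mul_const q).const_sub 1
  have hx : HasDerivAt (fun t : ℝ => (1 - 2 * (1 - t / 3) * q) ^ m)
      (↑m * (1 - 2 * (1 - γ / 3) * q) ^ (m - 1) * (-(2 * -(1/3) * q))) γ := hM.pow m
  have hy : HasDerivAt (fun t : ℝ => (1 - 4 * t / 3 * q) ^ m)
      (↑m * (1 - 4 * γ / 3 * q) ^ (m - 1) * (-(4 * 1 / 3 * q))) γ := hL.pow m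
  have hP1 : HasDerivAt (fun t : ℝ => (1 + 2 * (1 - 2 * (1 - t / 3) * q) ^ m + (1 - 4 * t / 3 * q) ^ m) / 4)
      ((↑m * (1 - 2 * (1 - γ / 3) * q) ^ (m - 1) * (-(2 * -(1/3) * q)) * 2
        + ↑m * (1 - 4 * γ / 3 * q) ^ (m - 1) * (-(4 * 1 / 3 * q))) / 4) γ := by
    have := (((hx.const_mul 2).const_add 1).add hy).div_const 4
    refine this.congr_deriv ?_; ring
  have hP2 : HasDerivAt (fun t : ℝ => (1 - 2 * (1 - 2 * (1 - t / 3) * q) ^ m + (1 - 4 * t / 3 * q) ^ m) / 4)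
      ((↑m * (1 - 2 * (1 - γ / 3) * q) ^ (m - 1) * (-(2 * -(1/3) * q)) * (-2)
        + ↑m * (1 - 4 * γ / 3 * q) ^ (m - 1) * (-(4 * 1 / 3 * q))) / 4) γ := by
    have := (((hx.const_mul 2).const_sub 1).add hy).div_const 4
    refine this.congr_deriv ?_; ring
  have hC : HasDerivAt (fun t : ℝ => (1 - (1 - 4 * t / 3 * q) ^ m) / 4)
      ((-(↑m * (1 - 4 * γ / 3 * q) ^ (m - 1) * (-(4 * 1 / 3 * q)))) / 4) γ :=
    (hy.const_sub 1).div_const 4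
  have hC2 : HasDerivAt (fun t : ℝ => (1 - (1 - 4 * t / 3 * q) ^ m) / 2)
      ((-(↑m * (1 - 4 * γ / 3 * q) ^ (m - 1) * (-(4 * 1 / 3 * q)))) / 2) γ :=
    (hy.const_sub 1).div_const 2
  set p1 : ℝ := (1 + 2 * (1 - 2 * (1 - γ / 3) * q) ^ m + (1 - 4 * γ / 3 * q) ^ m) / 4 with hp1def
  set p2 : ℝ := (1 - 2 * (1 - 2 * (1 - γ / 3) * q) ^ m + (1 - 4 * γ / 3 * q) ^ m) / 4 with hp2def
  set c : ℝ := (1 - (1 - 4 * γ / 3 * q) ^ m) / 4 with hcdef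
  have h2 : log 2 ≠ 0 := ne_of_gt (Real.log_pos (by norm_num))
  have hy1 : (1:ℝ) - (1 - 4 * γ / 3 * q) ^ m ≠ 0 := by
    intro h; apply hc; rw [hcdef, h]; norm_num
  have hT1 := hP1.mul ((hP1.log hp1).div_const (log 2))
  have hT2 := hP2.mul ((hP2.log hp2).div_const (log 2))
  have hT3 := hC2.mul ((hC.log hc).div_const (log 2))
  have hsum := (((hT1.const_add 2).add hT2).add hT3)
  have hfun : Cnc q m = (fun t : ℝ =>
      2 + (1 + 2 * (1 - 2 * (1 - t / 3) * q) ^ m + (1 - 4 * t / 3 * q) ^ m) / 4 *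
            (log ((1 + 2 * (1 - 2 * (1 - t / 3) * q) ^ m + (1 - 4 * t / 3 * q) ^ m) / 4) / log 2)
        + (1 - 2 * (1 - 2 * (1 - t / 3) * q) ^ m + (1 - 4 * t / 3 * q) ^ m) / 4 *
            (log ((1 - 2 * (1 - 2 * (1 - t / 3) * q) ^ m + (1 - 4 * t / 3 * q) ^ m) / 4) / log 2)
        + (1 - (1 - 4 * t / 3 * q) ^ m) / 2 *
            (log ((1 - (1 - 4 * t / 3 * q) ^ m) / 4) / log 2)) := by
    funext t; simp only [Cnc, Real.logb]
  rw [hfun]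
  refine hsum.congr_deriv ?_
  rw [← hp1def, ← hp2def]
  have egen : ∀ p b : ℝ, p ≠ 0 → p * (b / p / log 2) = b / log 2 := by
    intro p b hp; field_simp
  have egen2 : ∀ u b : ℝ, u ≠ 0 → u / 2 * (b / (u / 4) / log 2) = 2 * b / log 2 := by
    intro u b hu; field_simp; ring
  have e1 : ∀ b : ℝ, p1 * (b / p1 / log 2) = b / log 2 := fun b => egen p1 b hp1
  have e2 : ∀ b : ℝ, p2 * (b / p2 / log 2) = b / log 2 := fun b => egen p2 b hp2
  have e3 : ∀ b : ℝ, (1 - (1 - 4 * γ / 3 * q) ^ m) / 2 *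
      (b / ((1 - (1 - 4 * γ / 3 * q) ^ m) / 4) / log 2) = 2 * b / log 2 :=
    fun b => egen2 _ b hy1
  rw [e1, e2, e3]
  set lA := log p1
  set lB := log p2
  set lC := log ((1 - (1 - 4 * γ / 3 * q) ^ m) / 4)
  set X := (1 - 2 * (1 - γ / 3) * q) ^ (m - 1)
  set Y := (1 - 4 * γ / 3 * q) ^ (m - 1)
  field_simp
  ring

set_option maxHeartbeats 1000000 in
lemma Cnc_antitone (q : ℝ) (hq0 : 0 < q) (hq1 : q ≤ 1 / 2) (m : ℕ) (hm : 1 ≤ m) :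
    AntitoneOn (Cnc q m) (Set.Icc (0:ℝ) 1) := by
  have hm0 : m ≠ 0 := by omega
  -- basic bounds, valid for γ ∈ [0,1]
  have key : ∀ γ : ℝ, 0 ≤ γ → γ ≤ 1 →
      0 ≤ 1 - 2 * (1 - γ / 3) * q ∧ 1 - 2 * (1 - γ / 3) * q ≤ 1 - 4 * γ / 3 * q ∧
      1 - 4 * γ / 3 * q ≤ 1 ∧ 1 - 2 * (1 - γ / 3) * q < 1 := by
    intro γ h0 h1
    refine ⟨by nlinarith, by nlinarith, by nlinarith, by nlinarith⟩
  have pos : ∀ γ : ℝ, 0 ≤ γ → γ ≤ 1 →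
      0 < (1 + 2 * (1 - 2 * (1 - γ / 3) * q) ^ m + (1 - 4 * γ / 3 * q) ^ m) / 4 ∧
      0 < (1 - 2 * (1 - 2 * (1 - γ / 3) * q) ^ m + (1 - 4 * γ / 3 * q) ^ m) / 4 := by
    intro γ h0 h1
    obtain ⟨hM0, hML, hL1, hM1⟩ := key γ h0 h1
    have hx0 : 0 ≤ (1 - 2 * (1 - γ / 3) * q) ^ m := pow_nonneg hM0 m
    have hy0 : 0 ≤ (1 - 4 * γ / 3 * q) ^ m := pow_nonneg (hM0.trans hML) m
    have hxy : (1 - 2 * (1 - γ / 3) * q) ^ m ≤ (1 - 4 * γ / 3 * q) ^ m :=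
      pow_le_pow_left₀ hM0 hML m
    have hx1 : (1 - 2 * (1 - γ / 3) * q) ^ m < 1 := pow_lt_one₀ hM0 hM1 hm0
    constructor <;> nlinarith
  -- continuity
  have hcont : ContinuousOn (Cnc q m) (Set.Icc (0:ℝ) 1) := by
    have hfun : Cnc q m = (fun t : ℝ =>
        2 + (1 + 2 * (1 - 2 * (1 - t / 3) * q) ^ m + (1 - 4 * t / 3 * q) ^ m) / 4 *
              (log ((1 + 2 * (1 - 2 * (1 - t / 3) * q) ^ m + (1 - 4 * t / 3 * q) ^ m) / 4) / log 2)
          + (1 - 2 * (1 - 2 * (1 - t / 3) * q) ^ m + (1 - 4 * t / 3 * q) ^ m) / 4 *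
              (log ((1 - 2 * (1 - 2 * (1 - t / 3) * q) ^ m + (1 - 4 * t / 3 * q) ^ m) / 4) / log 2)
          + 2 * ((1 - (1 - 4 * t / 3 * q) ^ m) / 4 *
              log ((1 - (1 - 4 * t / 3 * q) ^ m) / 4)) / log 2) := by
      funext t; simp only [Cnc, Real.logb]; ring
    rw [hfun]
    have hc1 : Continuous (fun t : ℝ =>
        (1 + 2 * (1 - 2 * (1 - t / 3) * q) ^ m + (1 - 4 * t / 3 * q) ^ m) / 4) := by
      fun_prop
    have hc2 : Continuous (fun t : ℝ =>
        (1 - 2 * (1 - 2 * (1 - t / 3) * q) ^ m + (1 - 4 * t / 3 * q) ^ m) / 4) := by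
      fun_prop
    have hc3 : Continuous (fun t : ℝ => (1 - (1 - 4 * t / 3 * q) ^ m) / 4) := by fun_prop
    have hterm3 : Continuous (fun t : ℝ => 2 * ((1 - (1 - 4 * t / 3 * q) ^ m) / 4 *
        log ((1 - (1 - 4 * t / 3 * q) ^ m) / 4)) / log 2) :=
      ((continuous_const.mul (Real.continuous_mul_log.comp hc3)).div_const (log 2))
    apply ContinuousOn.add
    apply ContinuousOn.add
    apply ContinuousOn.add continuousOn_const
    · exact hc1.continuousOn.mul ((hc1.continuousOn.log
        (fun t ht => (pos t ht.1 ht.2).1.ne')).div_const (log 2))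
    · exact hc2.continuousOn.mul ((hc2.continuousOn.log
        (fun t ht => (pos t ht.1 ht.2).2.ne')).div_const (log 2))
    · exact hterm3.continuousOn
  -- positivity of c on the interior
  have cpos : ∀ γ : ℝ, 0 < γ → γ ≤ 1 → 0 < (1 - (1 - 4 * γ / 3 * q) ^ m) / 4 := by
    intro γ h0 h1
    obtain ⟨hM0, hML, hL1, hM1⟩ := key γ h0.le h1
    have : (1 - 4 * γ / 3 * q) ^ m < 1 := pow_lt_one₀ (hM0.trans hML) (by nlinarith) hm0
    linarith
  have hderivat : ∀ γ ∈ Set.Ioo (0:ℝ) 1, HasDerivAt (Cnc q m)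
      ((↑m * q / 3) *
        ((1 - 2 * (1 - γ / 3) * q) ^ (m - 1) *
            (log ((1 + 2 * (1 - 2 * (1 - γ / 3) * q) ^ m + (1 - 4 * γ / 3 * q) ^ m) / 4)
              - log ((1 - 2 * (1 - 2 * (1 - γ / 3) * q) ^ m + (1 - 4 * γ / 3 * q) ^ m) / 4))
          - (1 - 4 * γ / 3 * q) ^ (m - 1) *
            (log ((1 + 2 * (1 - 2 * (1 - γ / 3) * q) ^ m + (1 - 4 * γ / 3 * q) ^ m) / 4)
              + log ((1 - 2 * (1 - 2 * (1 - γ / 3) * q) ^ m + (1 - 4 * γ / 3 * q) ^ m) / 4)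
              - 2 * log ((1 - (1 - 4 * γ / 3 * q) ^ m) / 4))) / log 2) γ := by
    intro γ hγ
    exact Cnc_hasDerivAt q m γ (pos γ hγ.1.le hγ.2.le).1.ne' (pos γ hγ.1.le hγ.2.le).2.ne'
      (cpos γ hγ.1 hγ.2.le).ne'
  apply antitoneOn_of_deriv_nonpos (convex_Icc 0 1) hcont
  · rw [interior_Icc]
    exact fun x hx => ((hderivat x hx).differentiableAt).differentiableWithinAt
  · rw [interior_Icc]
    intro γ hγ
    rw [(hderivat γ hγ).deriv]
    obtain ⟨hM0, hML, hL1, hM1⟩ := key γ hγ.1.le hγ.2.le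
    have hp1 := (pos γ hγ.1.le hγ.2.le).1
    have hp2 := (pos γ hγ.1.le hγ.2.le).2
    have hcp := cpos γ hγ.1 hγ.2.le
    have hx0 : 0 ≤ (1 - 2 * (1 - γ / 3) * q) ^ m := pow_nonneg hM0 m
    have hxy : (1 - 2 * (1 - γ / 3) * q) ^ m ≤ (1 - 4 * γ / 3 * q) ^ m :=
      pow_le_pow_left₀ hM0 hML m
    -- log inequalities
    have hA : 0 ≤ log ((1 + 2 * (1 - 2 * (1 - γ / 3) * q) ^ m + (1 - 4 * γ / 3 * q) ^ m) / 4)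
        - log ((1 - 2 * (1 - 2 * (1 - γ / 3) * q) ^ m + (1 - 4 * γ / 3 * q) ^ m) / 4) := by
      have := Real.log_le_log hp2 (by linarith :
        (1 - 2 * (1 - 2 * (1 - γ / 3) * q) ^ m + (1 - 4 * γ / 3 * q) ^ m) / 4 ≤
        (1 + 2 * (1 - 2 * (1 - γ / 3) * q) ^ m + (1 - 4 * γ / 3 * q) ^ m) / 4)
      linarith
    have hCB : log ((1 - (1 - 4 * γ / 3 * q) ^ m) / 4) ≤
        log ((1 - 2 * (1 - 2 * (1 - γ / 3) * q) ^ m + (1 - 4 * γ / 3 * q) ^ m) / 4) :=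
      Real.log_le_log hcp (by linarith)
    have hpow : (1 - 2 * (1 - γ / 3) * q) ^ (m - 1) ≤ (1 - 4 * γ / 3 * q) ^ (m - 1) :=
      pow_le_pow_left₀ hM0 hML (m - 1)
    have hpow0 : 0 ≤ (1 - 2 * (1 - γ / 3) * q) ^ (m - 1) := pow_nonneg hM0 _
    set lA := log ((1 + 2 * (1 - 2 * (1 - γ / 3) * q) ^ m + (1 - 4 * γ / 3 * q) ^ m) / 4)
    set lB := log ((1 - 2 * (1 - 2 * (1 - γ / 3) * q) ^ m + (1 - 4 * γ / 3 * q) ^ m) / 4)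
    set lC := log ((1 - (1 - 4 * γ / 3 * q) ^ m) / 4)
    have hbracket : (1 - 2 * (1 - γ / 3) * q) ^ (m - 1) * (lA - lB)
        - (1 - 4 * γ / 3 * q) ^ (m - 1) * (lA + lB - 2 * lC) ≤ 0 := by
      have h1 : (1 - 2 * (1 - γ / 3) * q) ^ (m - 1) * (lA - lB) ≤
          (1 - 4 * γ / 3 * q) ^ (m - 1) * (lA + lB - 2 * lC) :=
        mul_le_mul hpow (by linarith) (by linarith) (hpow0.trans hpow)
      linarith
    have hnum : (↑m * q / 3) * ((1 - 2 * (1 - γ / 3) * q) ^ (m - 1) * (lA - lB)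
        - (1 - 4 * γ / 3 * q) ^ (m - 1) * (lA + lB - 2 * lC)) ≤ 0 := by
      apply mul_nonpos_of_nonneg_of_nonpos _ hbracket
      positivity
    exact div_nonpos_iff.mpr (Or.inr ⟨hnum, (Real.log_pos (by norm_num)).le⟩)

theorem Cnc_bounds (q : ℝ) (hq0 : 0 < q) (hq1 : q ≤ 1 / 2) (m : ℕ) (hm : 1 ≤ m)
    (γ : ℝ) (hγ0 : 0 ≤ γ) (hγ1 : γ ≤ 1) :
    Cnc q m 1 ≤ Cnc q m γ ∧ Cnc q m γ ≤ Cnc q m 0 := by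
  have h := Cnc_antitone q hq0 hq1 m hm
  constructor
  · exact h (Set.mem_Icc.mpr ⟨hγ0, hγ1⟩) (Set.mem_Icc.mpr ⟨by norm_num, le_refl 1⟩) hγ1
  · exact h (Set.mem_Icc.mpr ⟨le_refl 0, by norm_num⟩) (Set.mem_Icc.mpr ⟨hγ0, hγ1⟩) hγ0
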